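/- Let X be a finite T0 space that is a unique path space (every pair of points is connected by at most one directed path in the Hasse diagram of the specialization order). Then for every x ∈ X, the open set U_x \ {x} is the disjoint union of the sets U_y, where y ranges over the closed points of the subspace U_x \ {x}. -/

import Mathlib

/-- Minimal open neighbourhood of a point: intersection of all opens containing it. -/
def minSet {X : Type*} [TopologicalSpace X] (x : X) : Set X :=
  ⋂₀ {U : Set X | IsOpen U ∧ x ∈ U}

/-- The Hasse-diagram arrow `y → x`: `y` is a closed point of the subspace `U_x \ {x}`. -/
def HasseArrow {X : Type*} [TopologicalSpace X] (y x : X) : Prop :=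
  y ∈ minSet x \ {x} ∧ closure ({y} : Set X) ∩ (minSet x \ {x}) ⊆ {y}

/-- `l` is a directed path in the Hasse diagram from `a` to `b`. -/
def IsHassePath {X : Type*} [TopologicalSpace X] (a b : X) (l : List X) : Prop :=
  List.Chain (HasseArrow) a l ∧ (a :: l).getLast (List.cons_ne_nil a l) = b

/-- `X` is a unique path space: any two points are connected by at most one directed path
in the Hasse diagram of the specialization order. -/
def UniquePathSpace (X : Type*) [TopologicalSpace X] : Prop :=
  ∀ (a b : X) (l₁ l₂ : List X), IsHassePath a b l₁ → IsHassePath a b l₂ → l₁ = l₂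

lemma mem_minSet_self {X : Type*} [TopologicalSpace X] (x : X) : x ∈ minSet x :=
  fun _ hU => hU.2

lemma minSet_mono {X : Type*} [TopologicalSpace X] {y z : X} (h : z ∈ minSet y) :
    minSet z ⊆ minSet y :=
  fun _ hw => fun U hU => hw U ⟨hU.1, h U hU⟩

lemma minSet_antisymm {X : Type*} [TopologicalSpace X] [T0Space X] {y z : X}
    (h1 : z ∈ minSet y) (h2 : y ∈ minSet z) : y = z := by
  have hzy : z ⤳ y := specializes_iff_forall_open.mpr (fun s hs hys => h1 s ⟨hs, hys⟩)
  have hyz : y ⤳ z := specializes_iff_forall_open.mpr (fun s hs hzs => h2 s ⟨hs, hzs⟩)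
  exact (hyz.antisymm hzy).eq

lemma exists_arrow {X : Type*} [TopologicalSpace X] [Finite X] [T0Space X] {a b : X}
    (ha : a ∈ minSet b) (hne : a ≠ b) : ∃ y, HasseArrow y b ∧ a ∈ minSet y := by
  classical
  set S : Set X := {w | w ∈ minSet b ∧ w ≠ b ∧ a ∈ minSet w} with hSdef
  have hS : a ∈ S := ⟨ha, hne, mem_minSet_self a⟩
  obtain ⟨y, hyS, hmax⟩ := Set.Finite.exists_maximalFor minSet S (Set.toFinite S) ⟨a, hS⟩
  refine ⟨y, ⟨⟨hyS.1, by simp [hyS.2.1]⟩, ?_⟩, hyS.2.2⟩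
  rintro w ⟨hwc, hwb, hwnb⟩
  -- from w ∈ closure {y} : every open containing w contains y, hence y ∈ minSet w
  have hyw : y ∈ minSet w := by
    intro U hU
    rcases (mem_closure_iff.mp hwc U hU.1 hU.2) with ⟨t, ht, rfl⟩
    exact ht
  have hwS : w ∈ S := ⟨hwb, by simpa using hwnb, (minSet_mono hyw) hyS.2.2⟩
  have heq := hmax hwS (minSet_mono hyw)
  have hwy : w ∈ minSet y := heq (mem_minSet_self w)
  exact (minSet_antisymm hwy hyw).symm

lemma getLast_cons_concat {α : Type*} (a b : α) (l : List α) :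
    (a :: (l ++ [b])).getLast (List.cons_ne_nil _ _) = b := by
  induction l generalizing a with
  | nil => rfl
  | cons c l' ih => exact ih c

lemma chain_concat {α : Type*} {R : α → α → Prop} :
    ∀ {a : α} {l : List α} {b : α}, List.Chain R a l →
      R ((a :: l).getLast (List.cons_ne_nil a l)) b → List.Chain R a (l ++ [b])
  | a, [], b, _, hr => List.Chain.cons hr List.Chain.nil
  | a, c :: l', b, h, hr =>
      List.Chain.cons (List.isChain_cons_cons.mp h).1
        (chain_concat (List.isChain_cons_cons.mp h).2 (by simpa [List.getLast] using hr))

lemma exists_path {X : Type*} [TopologicalSpace X] [Finite X] [T0Space X] :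
    ∀ (n : ℕ) (b a : X), (minSet b).ncard ≤ n → a ∈ minSet b → ∃ l, IsHassePath a b l := by
  intro n
  induction n with
  | zero =>
    intro b a hcard _
    have : b ∈ minSet b := mem_minSet_self b
    have := Set.ncard_pos (Set.toFinite _) |>.mpr ⟨b, this⟩
    omega
  | succ n ih =>
    intro b a hcard ha
    by_cases hab : a = b
    · subst hab
      exact ⟨[], List.Chain.nil, rfl⟩
    · obtain ⟨y, hy, hay⟩ := exists_arrow ha hab
      have hsub : minSet y ⊆ minSet b := minSet_mono hy.1.1
      have hbnot : b ∉ minSet y := fun hb => hy.1.2 (minSet_antisymm hb hy.1.1)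
      have hlt : (minSet y).ncard < (minSet b).ncard :=
        Set.ncard_lt_ncard ⟨hsub, fun h => hbnot (h (mem_minSet_self b))⟩ (Set.toFinite _)
      obtain ⟨l, hl1, hl2⟩ := ih y a (by omega) hay
      refine ⟨l ++ [b], chain_concat hl1 (hl2 ▸ hy), ?_⟩
      exact getLast_cons_concat a b l

/-- In a finite T0 unique path space, `U_x \ {x}` is the disjoint union of the sets `U_y`,
where `y` runs through the closed points of the subspace `U_x \ {x}`. -/
theorem stmt_16 {X : Type*} [TopologicalSpace X] [Finite X] [T0Space X]
    (hX : UniquePathSpace X) (x : X) :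
    (⋃ y ∈ {y : X | HasseArrow y x}, minSet y) = minSet x \ {x} ∧
    ∀ y z : X, HasseArrow y x → HasseArrow z x → y ≠ z →
      Disjoint (minSet y) (minSet z) := by
  constructor
  · apply Set.Subset.antisymm
    · rintro w hw
      simp only [Set.mem_iUnion] at hw
      obtain ⟨y, hy, hwy⟩ := hw
      refine ⟨minSet_mono hy.1.1 hwy, ?_⟩
      rintro rfl
      exact hy.1.2 (minSet_antisymm hwy hy.1.1)
    · rintro z ⟨hz, hzx⟩
      obtain ⟨y, hy, hzy⟩ := exists_arrow hz (by simpa using hzx)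
      simp only [Set.mem_iUnion]
      exact ⟨y, hy, hzy⟩
  · intro y z hy hz hne
    rw [Set.disjoint_left]
    intro w hwy hwz
    obtain ⟨p, hp1, hp2⟩ := exists_path (minSet y).ncard y w le_rfl hwy
    obtain ⟨q, hq1, hq2⟩ := exists_path (minSet z).ncard z w le_rfl hwz
    have hpx : IsHassePath w x (p ++ [x]) := by
      refine ⟨chain_concat hp1 (hp2 ▸ hy), ?_⟩
      exact getLast_cons_concat w x p
    have hqx : IsHassePath w x (q ++ [x]) := by
      refine ⟨chain_concat hq1 (hq2 ▸ hz), ?_⟩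
      exact getLast_cons_concat w x q
    have := hX w x _ _ hpx hqx
    have hpq : p = q := List.append_cancel_right this
    subst hpq
    exact hne (hp2.symm.trans hq2)
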